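/- The bough decomposition of a rooted tree with n vertices terminates after at most log₂(n) iterations, and consequently decomposes the tree into vertex-disjoint paths such that every root-to-leaf path of T intersects at most log₂(n) of these paths. -/

import Mathlib

/-- Descendants of `v` (including `v` itself) in the rooted tree given by `parent`. -/
def desc {V : Type*} (parent : V → V) (v : V) : Set V :=
  {x | Relation.ReflTransGen (fun a b => parent a = b) x v}

/-- Ancestors of `v` (including `v` itself) in the rooted tree given by `parent`. -/
def anc {V : Type*} (parent : V → V) (v : V) : Set V :=
  {x | Relation.ReflTransGen (fun a b => parent a = b) v x}

/-- The children of `x` that survive in the vertex set `S`. -/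
def childrenIn {V : Type*} (parent : V → V) (S : Set V) (x : V) : Set V :=
  {c | c ∈ S ∧ c ≠ x ∧ parent c = x}

/-- `v` lies on a bough of the tree restricted to the surviving vertex set `S`:
every surviving descendant of `v` has at most one surviving child. -/
def inBoughIn {V : Type*} (parent : V → V) (S : Set V) (v : V) : Prop :=
  ∀ x ∈ desc parent v, x ∈ S → (childrenIn parent S x).Subsingleton

/-- The vertices surviving after `k` iterations of the bough decomposition
(each iteration removes all vertices lying on some bough of the current tree). -/
def surv {V : Type*} (parent : V → V) : ℕ → Set V
  | 0 => Set.univ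
  | k + 1 => {v | v ∈ surv parent k ∧ ¬ inBoughIn parent (surv parent k) v}

section Aux
variable {V : Type*} (parent : V → V)

lemma rtg_iff_iterate {x y : V} :
    Relation.ReflTransGen (fun a b => parent a = b) x y ↔ ∃ m, parent^[m] x = y := by
  constructor
  · intro h
    induction h with
    | refl => exact ⟨0, rfl⟩
    | tail _ hbc ih =>
      obtain ⟨m, hm⟩ := ih
      exact ⟨m + 1, by rw [Function.iterate_succ_apply', hm, hbc]⟩
  · rintro ⟨m, rfl⟩
    induction m generalizing x with
    | zero => exact .refl
    | succ m ih =>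
      rw [Function.iterate_succ_apply]
      exact .head rfl ih

variable {parent} {r : V} (hroot : parent r = r)
    (hreach : ∀ x, Relation.ReflTransGen (fun a b => parent a = b) x r)

include hroot hreach in
lemma eq_root_of_periodic {x : V} {m : ℕ} (hm : 1 ≤ m) (hx : parent^[m] x = x) : x = r := by
  obtain ⟨d, hd⟩ := (rtg_iff_iterate parent).1 (hreach x)
  have hk : ∀ k, parent^[k * m] x = x := by
    intro k
    induction k with
    | zero => simp
    | succ k ih =>
      have : (k + 1) * m = m + k * m := by ring
      rw [this, Function.iterate_add_apply, ih, hx]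
  have hdm : d ≤ d * m := Nat.le_mul_of_pos_right d hm
  have : parent^[(d * m - d) + d] x = r := by
    rw [Function.iterate_add_apply, hd, Function.iterate_fixed hroot]
  rw [Nat.sub_add_cancel hdm, hk d] at this
  exact this

lemma comparable_of_anc {a b x : V}
    (ha : Relation.ReflTransGen (fun a b => parent a = b) x a)
    (hb : Relation.ReflTransGen (fun a b => parent a = b) x b) :
    Relation.ReflTransGen (fun a b => parent a = b) a b ∨
      Relation.ReflTransGen (fun a b => parent a = b) b a := by
  obtain ⟨i, rfl⟩ := (rtg_iff_iterate parent).1 ha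
  obtain ⟨j, rfl⟩ := (rtg_iff_iterate parent).1 hb
  rcases le_total i j with h | h
  · left
    exact (rtg_iff_iterate parent).2 ⟨j - i, by rw [← Function.iterate_add_apply, Nat.sub_add_cancel h]⟩
  · right
    exact (rtg_iff_iterate parent).2 ⟨i - j, by rw [← Function.iterate_add_apply, Nat.sub_add_cancel h]⟩

include hroot hreach in
lemma rtg_antisymm {a b : V}
    (hab : Relation.ReflTransGen (fun a b => parent a = b) a b)
    (hba : Relation.ReflTransGen (fun a b => parent a = b) b a) : a = b := by
  obtain ⟨i, hi⟩ := (rtg_iff_iterate parent).1 hab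
  obtain ⟨j, hj⟩ := (rtg_iff_iterate parent).1 hba
  rcases Nat.eq_zero_or_pos (j + i) with h | h
  · obtain ⟨hj0, hi0⟩ := Nat.add_eq_zero.1 h
    subst hi0; simpa using hi
  · have hper : parent^[j + i] a = a := by
      rw [Function.iterate_add_apply, hi, hj]
    have har : a = r := eq_root_of_periodic hroot hreach h hper
    subst har
    rw [Function.iterate_fixed hroot] at hi
    exact hi

open Classical in
lemma exists_child_on_path {v w : V}
    (h : Relation.ReflTransGen (fun a b => parent a = b) v w) (hne : v ≠ w) :
    ∃ c, parent c = w ∧ c ≠ w ∧ Relation.ReflTransGen (fun a b => parent a = b) v c := by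
  have hex : ∃ m, parent^[m] v = w := (rtg_iff_iterate parent).1 h
  set m0 := Nat.find hex with hm0
  have hspec : parent^[m0] v = w := Nat.find_spec hex
  have hm0pos : 1 ≤ m0 := by
    rcases Nat.eq_zero_or_pos m0 with h0 | h0
    · exfalso; apply hne; rw [h0] at hspec; simpa using hspec
    · exact h0
  refine ⟨parent^[m0 - 1] v, ?_, ?_, ?_⟩
  · have : m0 - 1 + 1 = m0 := Nat.sub_add_cancel hm0pos
    calc parent (parent^[m0-1] v) = parent^[m0-1+1] v := (Function.iterate_succ_apply' parent (m0-1) v).symm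
    _ = w := by rw [this]; exact hspec
  · intro hc
    exact Nat.find_min hex (Nat.sub_lt hm0pos one_pos) hc
  · exact (rtg_iff_iterate parent).2 ⟨m0 - 1, rfl⟩
end Aux

section Surv
variable {V : Type*} (parent : V → V)

lemma surv_succ_subset (k : ℕ) : surv parent (k + 1) ⊆ surv parent k := fun _ h => h.1

lemma surv_antitone {k l : ℕ} (h : k ≤ l) : surv parent l ⊆ surv parent k := by
  induction l with
  | zero => simp_all
  | succ l ih =>
    rcases Nat.eq_or_lt_of_le h with rfl | h'
    · exact fun _ h => h
    · exact (surv_succ_subset parent l).trans (ih (Nat.lt_succ_iff.1 h'))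

lemma surv_up {k : ℕ} {x a : V} (hx : x ∈ surv parent k)
    (hxa : Relation.ReflTransGen (fun a b => parent a = b) x a) : a ∈ surv parent k := by
  induction k with
  | zero => trivial
  | succ k ih =>
    obtain ⟨hxk, hnb⟩ := hx
    refine ⟨ih hxk, fun hb => hnb fun y hy hyS => hb y (hy.trans hxa) hyS⟩

/-- leaves of the tree surviving at step `k` -/
def leaves (k : ℕ) : Set V :=
  {x | x ∈ surv parent k ∧ childrenIn parent (surv parent k) x = ∅}

end Surv

section Leaves
variable {V : Type*} {parent : V → V} {r : V}
  (hroot : parent r = r)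
  (hreach : ∀ x, Relation.ReflTransGen (fun a b => parent a = b) x r)

include hroot hreach in
lemma exists_leaf_below [Finite V] {k : ℕ} {v : V} (hv : v ∈ surv parent k) :
    ∃ l ∈ leaves parent k, Relation.ReflTransGen (fun a b => parent a = b) l v := by
  classical
  have hd : ∀ x : V, ∃ m, parent^[m] x = r := fun x => (rtg_iff_iterate parent).1 (hreach x)
  set d : V → ℕ := fun x => Nat.find (hd x) with hdd
  set T : Set V := surv parent k ∩ desc parent v with hT
  have hTne : T.Nonempty := ⟨v, hv, Relation.ReflTransGen.refl⟩
  obtain ⟨x, hxT, hmax⟩ := Set.Finite.exists_maximalFor d T (Set.toFinite T) hTne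
  refine ⟨x, ⟨hxT.1, ?_⟩, hxT.2⟩
  by_contra hne
  obtain ⟨c, hcS, hcx, hpc⟩ := Set.nonempty_iff_ne_empty.2 hne
  have hcr : c ≠ r := by
    rintro rfl
    exact hcx (by rw [← hpc, hroot])
  have hspec : ∀ y, parent^[d y] y = r := fun y => Nat.find_spec (hd y)
  have hmin : ∀ y m, parent^[m] y = r → d y ≤ m := fun y m h => Nat.find_min' (hd y) h
  have hdc1 : 1 ≤ d c := by
    by_contra h
    have h0 : d c = 0 := by omega
    have := hspec c
    rw [h0] at this
    exact hcr this
  obtain ⟨n', hn'⟩ : ∃ n', d c = n' + 1 := ⟨d c - 1, by omega⟩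
  have hxr : parent^[n'] x = r := by
    have := hspec c
    rw [hn', Function.iterate_succ_apply, hpc] at this
    exact this
  have hdxlt : d x < d c := by have := hmin x n' hxr; omega
  have hcT : c ∈ T := ⟨hcS, Relation.ReflTransGen.trans (Relation.ReflTransGen.single hpc) hxT.2⟩
  exact absurd (hmax (j := c) hcT hdxlt.le) (by omega)

include hroot hreach in
lemma desc_disjoint_children {c₁ c₂ v : V} (h₁ : parent c₁ = v) (h₂ : parent c₂ = v)
    (hn₁ : c₁ ≠ v) (hn₂ : c₂ ≠ v) (hne : c₁ ≠ c₂) :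
    desc parent c₁ ∩ desc parent c₂ = ∅ := by
  have key : ∀ a b : V, parent a = v → parent b = v → a ≠ v → b ≠ v → a ≠ b →
      ¬ Relation.ReflTransGen (fun a b => parent a = b) a b := by
    intro a b ha hb hna hnb hab hR
    obtain ⟨m, hm⟩ := (rtg_iff_iterate parent).1 hR
    rcases Nat.eq_zero_or_pos m with h0 | h0
    · exact hab (by simpa [h0] using hm)
    · obtain ⟨m', rfl⟩ := Nat.exists_eq_succ_of_ne_zero (Nat.pos_iff_ne_zero.1 h0)
      have hb2 : b = parent^[m'] v := by
        rw [← hm, Function.iterate_succ_apply, ha]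
      have hper : parent^[m' + 1] v = v := by
        rw [Function.iterate_succ_apply', ← hb2, hb]
      have := eq_root_of_periodic hroot hreach (Nat.succ_le_succ (Nat.zero_le m')) hper
      subst this
      rw [hb2, Function.iterate_fixed hroot] at hnb
      exact hnb rfl
  ext u
  simp only [Set.mem_inter_iff, Set.mem_empty_iff_false, iff_false, not_and]
  intro hu1 hu2
  rcases comparable_of_anc hu1 hu2 with h | h
  · exact key c₁ c₂ h₁ h₂ hn₁ hn₂ hne h
  · exact key c₂ c₁ h₂ h₁ hn₂ hn₁ hne.symm h

end Leaves
section Halve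
variable {V : Type*} {parent : V → V} {r : V}
  (hroot : parent r = r)
  (hreach : ∀ x, Relation.ReflTransGen (fun a b => parent a = b) x r)

include hroot hreach in
lemma leaf_branches {k : ℕ} {v : V} (hv : v ∈ leaves parent (k+1)) :
    ∃ c₁ c₂, c₁ ≠ c₂ ∧ c₁ ∈ childrenIn parent (surv parent k) v ∧
      c₂ ∈ childrenIn parent (surv parent k) v := by
  obtain ⟨⟨hvk, hnb⟩, hleaf⟩ := hv
  rw [inBoughIn] at hnb; push_neg at hnb
  obtain ⟨x, hxdesc, hxS, hxsub⟩ := hnb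
  unfold Set.Nontrivial at hxsub
  obtain ⟨c₁, hc₁, c₂, hc₂, hne⟩ := hxsub
  have hxv : x = v := by
    by_contra hxv
    obtain ⟨c, hpc, hcv, hxc⟩ := exists_child_on_path hxdesc hxv
    have hcS : c ∈ surv parent k := surv_up parent hxS hxc
    have hcS1 : c ∈ surv parent (k+1) := by
      refine ⟨hcS, fun hb => ?_⟩
      exact hne (hb x hxc hxS hc₁ hc₂)
    have hmem : c ∈ childrenIn parent (surv parent (k+1)) v := ⟨hcS1, hcv, hpc⟩
    rw [hleaf] at hmem; exact hmem
  subst hxv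
  exact ⟨c₁, c₂, hne, hc₁, hc₂⟩

include hroot hreach in
lemma leaves_desc_disjoint {k : ℕ} {v w : V} (hv : v ∈ leaves parent k)
    (hw : w ∈ leaves parent k) (hne : v ≠ w) :
    desc parent v ∩ desc parent w = ∅ := by
  have key : ∀ a b : V, a ∈ leaves parent k → b ∈ leaves parent k → a ≠ b →
      ¬ Relation.ReflTransGen (fun a b => parent a = b) a b := by
    intro a b ha hb hab hR
    obtain ⟨c, hpc, hcb, hac⟩ := exists_child_on_path hR hab
    have hmem : c ∈ childrenIn parent (surv parent k) b :=
      ⟨surv_up parent ha.1 hac, hcb, hpc⟩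
    rw [hb.2] at hmem; exact hmem
  ext u
  simp only [Set.mem_inter_iff, Set.mem_empty_iff_false, iff_false, not_and]
  intro h1 h2
  rcases comparable_of_anc h1 h2 with h | h
  · exact key v w hv hw hne h
  · exact key w v hw hv hne.symm h

include hroot hreach in
lemma halving [Fintype V] (k : ℕ) :
    2 * (leaves parent (k+1)).ncard ≤ (leaves parent k).ncard := by
  classical
  set A : Finset V := (leaves parent (k+1)).toFinite.toFinset with hA
  set F : V → Finset V := fun v => ((leaves parent k) ∩ desc parent v).toFinite.toFinset with hF
  have hsub : A.biUnion F ⊆ (leaves parent k).toFinite.toFinset := by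
    intro x hx
    simp only [Finset.mem_biUnion] at hx
    obtain ⟨v, hv, hx⟩ := hx
    simp only [hF, Set.Finite.mem_toFinset] at hx ⊢
    exact hx.1
  have hdisj : ∀ v ∈ A, ∀ w ∈ A, v ≠ w → Disjoint (F v) (F w) := by
    intro v hv w hw hne
    rw [Finset.disjoint_left]
    intro x hxv hxw
    simp only [hF, Set.Finite.mem_toFinset] at hxv hxw
    have hdd := leaves_desc_disjoint hroot hreach
      (by simpa [hA, Set.Finite.mem_toFinset] using hv)
      (by simpa [hA, Set.Finite.mem_toFinset] using hw) hne
    have hmem : x ∈ desc parent v ∩ desc parent w := ⟨hxv.2, hxw.2⟩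
    rw [hdd] at hmem; exact hmem
  have hcard2 : ∀ v ∈ A, 2 ≤ (F v).card := by
    intro v hv
    rw [hA, Set.Finite.mem_toFinset] at hv
    obtain ⟨c₁, c₂, hne, hc₁, hc₂⟩ := leaf_branches hroot hreach hv
    obtain ⟨l₁, hl₁, hl₁c⟩ := exists_leaf_below hroot hreach hc₁.1
    obtain ⟨l₂, hl₂, hl₂c⟩ := exists_leaf_below hroot hreach hc₂.1
    have hdd := desc_disjoint_children hroot hreach hc₁.2.2 hc₂.2.2 hc₁.2.1 hc₂.2.1 hne
    have hl12 : l₁ ≠ l₂ := by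
      rintro rfl
      have hmem : l₁ ∈ desc parent c₁ ∩ desc parent c₂ := ⟨hl₁c, hl₂c⟩
      rw [hdd] at hmem; exact hmem
    have m1 : l₁ ∈ F v := by
      simp only [hF, Set.Finite.mem_toFinset]
      exact ⟨hl₁, hl₁c.trans (Relation.ReflTransGen.single hc₁.2.2)⟩
    have m2 : l₂ ∈ F v := by
      simp only [hF, Set.Finite.mem_toFinset]
      exact ⟨hl₂, hl₂c.trans (Relation.ReflTransGen.single hc₂.2.2)⟩
    exact Finset.one_lt_card.2 ⟨l₁, m1, l₂, m2, hl12⟩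
  have key : 2 * A.card ≤ ((leaves parent k).toFinite.toFinset).card := by
    calc 2 * A.card = A.card • 2 := by rw [smul_eq_mul, mul_comm]
    _ ≤ ∑ v ∈ A, (F v).card := Finset.card_nsmul_le_sum A _ 2 hcard2
    _ = (A.biUnion F).card := (Finset.card_biUnion hdisj).symm
    _ ≤ _ := Finset.card_le_card hsub
  rwa [Set.ncard_eq_toFinset_card _ (Set.toFinite _),
    Set.ncard_eq_toFinset_card _ (Set.toFinite _)]

end Halve

/-- The bough decomposition of a rooted tree with `n ≥ 2` vertices terminates after at
most `log₂ n` iterations, and every root-to-leaf path of the tree meets boughs of at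
most `log₂ n` distinct iterations, hence intersects at most `log₂ n` of the
vertex-disjoint paths of the decomposition. -/
theorem bough_decomposition_log_iterations {V : Type*} [Fintype V]
    (parent : V → V) (r : V) (hroot : parent r = r)
    (hreach : ∀ x, Relation.ReflTransGen (fun a b => parent a = b) x r)
    (hn : 2 ≤ Fintype.card V) :
    surv parent (Nat.clog 2 (Fintype.card V)) = ∅
      ∧ ∀ v, childrenIn parent Set.univ v = ∅ →
          Set.ncard {k : ℕ | ∃ x ∈ anc parent v, x ∈ surv parent k ∧ x ∉ surv parent (k + 1)}
            ≤ Nat.clog 2 (Fintype.card V) := by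
  set n := Fintype.card V with hncard
  set K := Nat.clog 2 n with hK
  have hKn : n ≤ 2 ^ K := Nat.le_pow_clog (by norm_num) n
  have hL0 : (leaves parent 0).ncard < n := by
    have hrnot : r ∉ leaves parent 0 := by
      intro hr
      obtain ⟨v, hvne⟩ := Fintype.exists_ne_of_one_lt_card (by omega) r
      obtain ⟨c, hpc, hcr, _⟩ := exists_child_on_path (hreach v) hvne
      have hmem : c ∈ childrenIn parent (surv parent 0) r := ⟨trivial, hcr, hpc⟩
      rw [hr.2] at hmem; exact hmem
    have hss : leaves parent 0 ⊂ Set.univ := Set.ssubset_univ_iff.2 (by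
      intro h; rw [h] at hrnot; exact hrnot trivial)
    calc (leaves parent 0).ncard < (Set.univ : Set V).ncard :=
          Set.ncard_lt_ncard hss Set.finite_univ
      _ = n := by rw [Set.ncard_univ, Nat.card_eq_fintype_card]
  have hchain : ∀ k, 2 ^ k * (leaves parent k).ncard ≤ (leaves parent 0).ncard := by
    intro k
    induction k with
    | zero => simp
    | succ k ih =>
      calc 2 ^ (k + 1) * (leaves parent (k + 1)).ncard
          = 2 ^ k * (2 * (leaves parent (k + 1)).ncard) := by ring
        _ ≤ 2 ^ k * (leaves parent k).ncard :=
            Nat.mul_le_mul_left _ (halving hroot hreach k)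
        _ ≤ _ := ih
  have hempty : surv parent K = ∅ := by
    by_contra h
    obtain ⟨v, hv⟩ := Set.nonempty_iff_ne_empty.2 h
    obtain ⟨l, hl, -⟩ := exists_leaf_below hroot hreach hv
    have h1 : 0 < (leaves parent K).ncard := (Set.ncard_pos (Set.toFinite _)).2 ⟨l, hl⟩
    have h2 : 2 ^ K ≤ 2 ^ K * (leaves parent K).ncard := Nat.le_mul_of_pos_right _ h1
    have h3 := hchain K
    omega
  refine ⟨hempty, fun v _ => ?_⟩
  have hsub : {k : ℕ | ∃ x ∈ anc parent v, x ∈ surv parent k ∧ x ∉ surv parent (k + 1)}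
      ⊆ Set.Iio K := by
    rintro k ⟨x, -, hxk, -⟩
    simp only [Set.mem_Iio]
    by_contra h
    push_neg at h
    have hx : x ∈ surv parent K := surv_antitone parent h hxk
    rw [hempty] at hx; exact hx
  calc Set.ncard _ ≤ (Set.Iio K).ncard := Set.ncard_le_ncard hsub (Set.finite_Iio K)
    _ = K := by simp [Set.ncard_eq_toFinset_card' (Set.Iio K)]
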